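/- If |Ψ⟩ = |ψ_{PS R1}⟩ ⊗ |ψ_{B R2}⟩ is a product of pure states across the split (P,S,R1) vs (B,R2), then tr_P|Ψ⟩⟨Ψ| = (tr_P|ψ_{PS R1}⟩⟨ψ_{PS R1}|) ⊗ |ψ_{B R2}⟩⟨ψ_{B R2}|, and E_F between S⊗B and R1⊗R2 of this state equals E_F^{S-R1}(tr_P|ψ_{PS R1}⟩⟨ψ_{PS R1}|) + S(tr_{R2}|ψ_{B R2}⟩⟨ψ_{B R2}|). -/

import Mathlib

open Matrix BigOperators
open scoped Kronecker ComplexOrder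

noncomputable section

/-- A density matrix: positive semidefinite with unit trace. -/
def IsDensityMatrix {n : Type*} [Fintype n] (ρ : Matrix n n ℂ) : Prop :=
  ρ.PosSemidef ∧ ρ.trace = 1

/-- von Neumann entropy `S(ρ) = -tr(ρ log ρ)`, computed via the eigenvalues
(with the convention `0 log 0 = 0`); junk value `0` for non-Hermitian input. -/
noncomputable def vnEntropy {n : Type*} [Fintype n] [DecidableEq n]
    (ρ : Matrix n n ℂ) : ℝ :=
  if h : ρ.IsHermitian then -∑ i, h.eigenvalues i * Real.log (h.eigenvalues i) else 0

/-- Matrix logarithm of a Hermitian matrix (taken on the support / spectrum);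
junk value `0` for non-Hermitian input. -/
noncomputable def matLog {n : Type*} [Fintype n] [DecidableEq n]
    (ρ : Matrix n n ℂ) : Matrix n n ℂ :=
  if h : ρ.IsHermitian then
    (h.eigenvectorUnitary : Matrix n n ℂ) *
      Matrix.diagonal (fun i => (Real.log (h.eigenvalues i) : ℂ)) *
      star (h.eigenvectorUnitary : Matrix n n ℂ)
  else 0

/-- Quantum relative entropy `D(ρ‖σ) = tr[ρ (log ρ - log σ)]`. -/
noncomputable def relEntropy {n : Type*} [Fintype n] [DecidableEq n]
    (ρ σ : Matrix n n ℂ) : ℝ :=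
  ((ρ * (matLog ρ - matLog σ)).trace).re

/-- The rank-one projector `|ψ⟩⟨ψ|` associated with a vector `ψ`. -/
def pureState {n : Type*} (ψ : n → ℂ) : Matrix n n ℂ :=
  Matrix.vecMulVec ψ (star ψ)

/-- Partial trace over the first tensor factor. -/
noncomputable def trFst {a b : Type*} [Fintype a]
    (M : Matrix (a × b) (a × b) ℂ) : Matrix b b ℂ :=
  Matrix.of fun i j => ∑ k, M (k, i) (k, j)

/-- Partial trace over the second tensor factor. -/
noncomputable def trSnd {a b : Type*} [Fintype b]
    (M : Matrix (a × b) (a × b) ℂ) : Matrix a a ℂ :=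
  Matrix.of fun i j => ∑ k, M (i, k) (j, k)

/-- `ψ` is a unit vector. -/
def IsUnitVec {n : Type*} [Fintype n] (ψ : n → ℂ) : Prop :=
  ∑ i, Complex.normSq (ψ i) = 1

/-- Entanglement entropy of a bipartite pure state:
the entropy of the reduced state on the first factor. -/
noncomputable def entEntropy {a b : Type*} [Fintype a] [Fintype b] [DecidableEq a]
    (ψ : a × b → ℂ) : ℝ :=
  vnEntropy (trSnd (pureState ψ))

/-- Entanglement of formation: infimum of the average pure-state entanglement
entropy over all finite pure-state decompositions of `ρ`. -/
noncomputable def entFormation {a b : Type*} [Fintype a] [Fintype b]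
    [DecidableEq a] (ρ : Matrix (a × b) (a × b) ℂ) : ℝ :=
  sInf { x | ∃ (m : ℕ) (q : Fin m → ℝ) (φ : Fin m → a × b → ℂ),
    (∀ j, 0 ≤ q j) ∧ (∑ j, q j = 1) ∧ (∀ j, IsUnitVec (φ j)) ∧
    ρ = ∑ j, (q j : ℂ) • pureState (φ j) ∧
    x = ∑ j, q j * entEntropy (φ j) }

/-- `e` is an orthonormal basis (given as a family of vectors) of the space `n → ℂ`. -/
def IsONBasis {ι n : Type*} [Fintype ι] [Fintype n] [DecidableEq ι] [DecidableEq n]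
    (e : ι → n → ℂ) : Prop :=
  (∀ a b, ∑ x, (starRingEnd ℂ) (e a x) * e b x = if a = b then 1 else 0) ∧
  (∀ x y, ∑ a, e a x * (starRingEnd ℂ) (e a y) = if x = y then 1 else 0)

/-- The binary entropy function. -/
noncomputable def binEnt (x : ℝ) : ℝ :=
  -(x * Real.log x) - (1 - x) * Real.log (1 - x)

end

section AuxLemmas

open Polynomial

lemma charpoly_conj_aux {n : Type*} [Fintype n] [DecidableEq n]
    (U W M : Matrix n n ℂ) (hUW : U * W = 1) :
    (U * M * W).charpoly = M.charpoly := by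
  have hmap : U.map C * W.map C = 1 := by
    rw [← Matrix.map_mul, hUW]; simp
  have hcm : charmatrix (U * M * W)
      = U.map C * charmatrix M * W.map C := by
    unfold charmatrix
    rw [Matrix.mul_sub, Matrix.sub_mul]
    congr 1
    · rw [scalar_apply, ← Matrix.smul_one_eq_diagonal, Matrix.mul_smul, Matrix.smul_mul,
        mul_one, hmap]
    · simp [RingHom.mapMatrix_apply, ← Matrix.map_mul]
  have hdet : (U.map C).det * (W.map C).det = 1 := by
    rw [← Matrix.det_mul, hmap]
    simp
  rw [Matrix.charpoly, hcm, Matrix.det_mul, Matrix.det_mul, Matrix.charpoly]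
  ring_nf
  rw [mul_comm ((U.map C).det), mul_assoc, hdet, mul_one]

lemma charpoly_diagonal_aux {n : Type*} [Fintype n] [DecidableEq n] (v : n → ℂ) :
    (Matrix.diagonal v).charpoly = ∏ i, (X - C (v i)) := by
  have : charmatrix (Matrix.diagonal v) = Matrix.diagonal (fun i => X - C (v i)) := by
    ext i j
    by_cases h : i = j <;> simp [h, charmatrix_apply, Matrix.diagonal_apply, Matrix.diagonal]
  rw [Matrix.charpoly, this, Matrix.det_diagonal]

lemma sum_g_eigenvalues {n : Type*} [Fintype n] [DecidableEq n]
    {M : Matrix n n ℂ} (hM : M.IsHermitian) (W : Matrix n n ℂ)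
    (hW : W * star W = 1) (d : n → ℝ)
    (hMd : M = W * Matrix.diagonal (fun i => (d i : ℂ)) * star W)
    (g : ℝ → ℝ) :
    ∑ i, g (hM.eigenvalues i) = ∑ i, g (d i) := by
  have hU : (hM.eigenvectorUnitary : Matrix n n ℂ) * star (hM.eigenvectorUnitary : Matrix n n ℂ) = 1 :=
    Matrix.mem_unitaryGroup_iff.mp hM.eigenvectorUnitary.2
  have h1 : (Matrix.diagonal (fun i => (d i : ℂ))).charpoly = M.charpoly := by
    rw [hMd]; exact (charpoly_conj_aux W (star W) _ hW).symm
  have h2 : (Matrix.diagonal (fun i => (hM.eigenvalues i : ℂ))).charpoly = M.charpoly := by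
    conv_rhs => rw [hM.spectral_theorem]
    exact (charpoly_conj_aux _ (star (hM.eigenvectorUnitary : Matrix n n ℂ)) _ hU).symm
  have key : (Finset.univ.val.map (fun i => (d i : ℂ)))
      = (Finset.univ.val.map (fun i => (hM.eigenvalues i : ℂ))) := by
    have r1 := Polynomial.roots_multiset_prod_X_sub_C
      (Finset.univ.val.map (fun i => (d i : ℂ)))
    have r2 := Polynomial.roots_multiset_prod_X_sub_C
      (Finset.univ.val.map (fun i => (hM.eigenvalues i : ℂ)))
    rw [← r1, ← r2]
    congr 1
    have e1 : ((Finset.univ.val.map (fun i => (d i : ℂ))).map fun a => X - C a).prod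
        = ∏ i, (X - C ((d i : ℂ))) := by
      rw [Multiset.map_map]; rfl
    have e2 : ((Finset.univ.val.map (fun i => (hM.eigenvalues i : ℂ))).map fun a => X - C a).prod
        = ∏ i, (X - C ((hM.eigenvalues i : ℂ))) := by
      rw [Multiset.map_map]; rfl
    rw [e1, e2, ← charpoly_diagonal_aux, ← charpoly_diagonal_aux, h1, h2]
  have hmm : ((Finset.univ.val.map (fun i => (d i : ℂ))).map (fun z => g z.re)).sum
      = ((Finset.univ.val.map (fun i => (hM.eigenvalues i : ℂ))).map (fun z => g z.re)).sum := by
    rw [key]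
  simp only [Multiset.map_map, Function.comp] at hmm
  simp only [Complex.ofReal_re] at hmm
  rw [Finset.sum, Finset.sum]
  exact hmm.symm

lemma star_kronecker {m n : Type*} (A : Matrix m m ℂ) (B : Matrix n n ℂ) :
    star (A ⊗ₖ B) = (star A) ⊗ₖ (star B) := by
  ext ⟨i, j⟩ ⟨k, l⟩
  simp [Matrix.conjTranspose_apply, Matrix.kroneckerMap_apply, mul_comm]

lemma isHermitian_kronecker {m n : Type*} {A : Matrix m m ℂ} {B : Matrix n n ℂ}
    (hA : A.IsHermitian) (hB : B.IsHermitian) : (A ⊗ₖ B).IsHermitian := by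
  have h : star (A ⊗ₖ B) = A ⊗ₖ B := by
    rw [star_kronecker]
    show (Aᴴ) ⊗ₖ (Bᴴ) = _
    rw [hA.eq, hB.eq]
  exact h

lemma sum_eigenvalues_eq_trace {n : Type*} [Fintype n] [DecidableEq n]
    {M : Matrix n n ℂ} (hM : M.IsHermitian) :
    ∑ i, (hM.eigenvalues i : ℂ) = M.trace := by
  have hU : star (hM.eigenvectorUnitary : Matrix n n ℂ) * (hM.eigenvectorUnitary : Matrix n n ℂ) = 1 :=
    Matrix.UnitaryGroup.star_mul_self _
  conv_rhs => rw [hM.spectral_theorem, Unitary.conjStarAlgAut_apply]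
  rw [Matrix.trace_mul_cycle, hU, Matrix.one_mul, Matrix.trace_diagonal]
  rfl

lemma kronecker_spectral {m n : Type*} [Fintype m] [Fintype n] [DecidableEq m] [DecidableEq n]
    {A : Matrix m m ℂ} {B : Matrix n n ℂ} (hA : A.IsHermitian) (hB : B.IsHermitian) :
    ∃ W : Matrix (m × n) (m × n) ℂ, W * star W = 1 ∧
      A ⊗ₖ B = W * Matrix.diagonal
        (fun p : m × n => ((hA.eigenvalues p.1 * hB.eigenvalues p.2 : ℝ) : ℂ)) * star W := by
  set U := (hA.eigenvectorUnitary : Matrix m m ℂ)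
  set V := (hB.eigenvectorUnitary : Matrix n n ℂ)
  refine ⟨U ⊗ₖ V, ?_, ?_⟩
  · rw [star_kronecker, ← Matrix.mul_kronecker_mul,
      Matrix.mem_unitaryGroup_iff.mp hA.eigenvectorUnitary.2,
      Matrix.mem_unitaryGroup_iff.mp hB.eigenvectorUnitary.2, Matrix.one_kronecker_one]
  · conv_lhs => rw [hA.spectral_theorem, hB.spectral_theorem, Unitary.conjStarAlgAut_apply,
        Unitary.conjStarAlgAut_apply]
    rw [star_kronecker, Matrix.mul_kronecker_mul, Matrix.mul_kronecker_mul,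
      Matrix.diagonal_kronecker_diagonal]
    congr 1
    congr 1
    ext p
    push_cast
    rfl

lemma xlogx_mul {a b : ℝ} (ha : 0 ≤ a) (hb : 0 ≤ b) :
    (a * b) * Real.log (a * b) = b * (a * Real.log a) + a * (b * Real.log b) := by
  rcases eq_or_lt_of_le ha with h | h
  · simp [← h]
  rcases eq_or_lt_of_le hb with h' | h'
  · simp [← h']
  rw [Real.log_mul (ne_of_gt h) (ne_of_gt h')]
  ring

lemma vnEntropy_kronecker {m n : Type*} [Fintype m] [Fintype n] [DecidableEq m] [DecidableEq n]
    {A : Matrix m m ℂ} {B : Matrix n n ℂ}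
    (hA : A.PosSemidef) (hB : B.PosSemidef) (hTA : A.trace = 1) (hTB : B.trace = 1) :
    vnEntropy (A ⊗ₖ B) = vnEntropy A + vnEntropy B := by
  have hH := isHermitian_kronecker hA.1 hB.1
  obtain ⟨W, hW, hD⟩ := kronecker_spectral hA.1 hB.1
  rw [vnEntropy, dif_pos hH, vnEntropy, dif_pos hA.1, vnEntropy, dif_pos hB.1]
  rw [sum_g_eigenvalues hH W hW _ hD (fun t => t * Real.log t)]
  have hsum_d : ∑ i, hA.1.eigenvalues i = 1 := by
    have h := sum_eigenvalues_eq_trace hA.1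
    rw [hTA] at h
    exact_mod_cast h
  have hsum_e : ∑ j, hB.1.eigenvalues j = 1 := by
    have h := sum_eigenvalues_eq_trace hB.1
    rw [hTB] at h
    exact_mod_cast h
  rw [Fintype.sum_prod_type]
  have step : (∑ i : m, ∑ j : n, hA.1.eigenvalues i * hB.1.eigenvalues j *
        Real.log (hA.1.eigenvalues i * hB.1.eigenvalues j))
      = ∑ i : m, ∑ j : n,
        (hB.1.eigenvalues j * (hA.1.eigenvalues i * Real.log (hA.1.eigenvalues i))
          + hA.1.eigenvalues i * (hB.1.eigenvalues j * Real.log (hB.1.eigenvalues j))) := by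
    refine Finset.sum_congr rfl fun i _ => Finset.sum_congr rfl fun j _ => ?_
    exact xlogx_mul (hA.eigenvalues_nonneg i) (hB.eigenvalues_nonneg j)
  rw [step]
  rw [Finset.sum_congr rfl (fun (i : m) _ => Finset.sum_add_distrib), Finset.sum_add_distrib]
  have e1 : ∑ i : m, ∑ j : n, hB.1.eigenvalues j * (hA.1.eigenvalues i * Real.log (hA.1.eigenvalues i))
      = ∑ i, hA.1.eigenvalues i * Real.log (hA.1.eigenvalues i) := by
    refine Finset.sum_congr rfl fun i _ => ?_
    rw [← Finset.sum_mul, hsum_e, one_mul]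
  have e2 : ∑ i : m, ∑ j : n, hA.1.eigenvalues i * (hB.1.eigenvalues j * Real.log (hB.1.eigenvalues j))
      = ∑ j, hB.1.eigenvalues j * Real.log (hB.1.eigenvalues j) := by
    have inner : ∀ i : m, (∑ j : n, hA.1.eigenvalues i * (hB.1.eigenvalues j * Real.log (hB.1.eigenvalues j)))
        = hA.1.eigenvalues i * ∑ j, hB.1.eigenvalues j * Real.log (hB.1.eigenvalues j) := by
      intro i; rw [Finset.mul_sum]
    rw [Finset.sum_congr rfl (fun i _ => inner i), ← Finset.sum_mul, hsum_d, one_mul]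
  rw [e1, e2]
  ring

lemma pureState_apply {n : Type*} (ψ : n → ℂ) (i j : n) :
    pureState ψ i j = ψ i * (starRingEnd ℂ) (ψ j) := rfl

lemma trSnd_pureState_apply {a b : Type*} [Fintype b] (φ : a × b → ℂ) (i j : a) :
    trSnd (pureState φ) i j = ∑ k, φ (i, k) * (starRingEnd ℂ) (φ (j, k)) := rfl

lemma trFst_pureState_apply {a b : Type*} [Fintype a] (φ : a × b → ℂ) (i j : b) :
    trFst (pureState φ) i j = ∑ k, φ (k, i) * (starRingEnd ℂ) (φ (k, j)) := rfl

lemma trSnd_pureState_posSemidef {a b : Type*} [Fintype a] [Fintype b] [DecidableEq a]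
    (φ : a × b → ℂ) : (trSnd (pureState φ)).PosSemidef := by
  rw [Matrix.posSemidef_iff_dotProduct_mulVec]
  constructor
  · ext i j
    rw [Matrix.conjTranspose_apply]
    show (starRingEnd ℂ) (∑ k, φ (j, k) * (starRingEnd ℂ) (φ (i, k)))
        = ∑ k, φ (i, k) * (starRingEnd ℂ) (φ (j, k))
    rw [map_sum]
    refine Finset.sum_congr rfl fun k _ => ?_
    rw [_root_.map_mul, Complex.conj_conj]
    ring
  · intro x
    set c : b → ℂ := fun k => ∑ i, (starRingEnd ℂ) (x i) * φ (i, k) with hc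
    have R1 : ∑ k, c k * (starRingEnd ℂ) (c k)
        = ∑ k, ∑ i, ∑ j, ((starRingEnd ℂ) (x i) * φ (i, k)) *
            (x j * (starRingEnd ℂ) (φ (j, k))) := by
      refine Finset.sum_congr rfl fun k _ => ?_
      rw [hc, map_sum, Finset.sum_mul]
      refine Finset.sum_congr rfl fun i _ => ?_
      rw [Finset.mul_sum]
      refine Finset.sum_congr rfl fun j _ => ?_
      rw [_root_.map_mul, Complex.conj_conj]
      try ring
    have L1 : dotProduct (star x) (trSnd (pureState φ) *ᵥ x)
        = ∑ i, ∑ k, ∑ j, ((starRingEnd ℂ) (x i) * φ (i, k)) *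
            (x j * (starRingEnd ℂ) (φ (j, k))) := by
      rw [dotProduct]
      refine Finset.sum_congr rfl fun i _ => ?_
      rw [Matrix.mulVec, dotProduct, Finset.mul_sum]
      have inner : ∀ j, star x i * (trSnd (pureState φ) i j * x j)
          = ∑ k, ((starRingEnd ℂ) (x i) * φ (i, k)) * (x j * (starRingEnd ℂ) (φ (j, k))) := by
        intro j
        rw [trSnd_pureState_apply, Finset.sum_mul, Finset.mul_sum]
        refine Finset.sum_congr rfl fun k _ => ?_
        simp only [Pi.star_apply, Complex.star_def]
        try ring
      rw [Finset.sum_congr rfl fun j _ => inner j, Finset.sum_comm]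
    have key : dotProduct (star x) (trSnd (pureState φ) *ᵥ x)
        = ∑ k, c k * (starRingEnd ℂ) (c k) := by
      rw [L1, R1, Finset.sum_comm]
    rw [key]
    refine Finset.sum_nonneg fun k _ => ?_
    rw [Complex.mul_conj]
    exact Complex.zero_le_real.mpr (Complex.normSq_nonneg _)

lemma trSnd_pureState_trace {a b : Type*} [Fintype a] [Fintype b]
    (φ : a × b → ℂ) (h : IsUnitVec φ) : (trSnd (pureState φ)).trace = 1 := by
  rw [Matrix.trace]
  have step : ∀ i, Matrix.diag (trSnd (pureState φ)) i
      = ((∑ k, Complex.normSq (φ (i, k)) : ℝ) : ℂ) := by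
    intro i
    simp [Matrix.diag, trSnd_pureState_apply, Complex.mul_conj]
  rw [Finset.sum_congr rfl (fun i _ => step i)]
  norm_cast
  rw [← Fintype.sum_prod_type (f := fun p : a × b => Complex.normSq (φ p))]
  exact h

lemma sum_factor {s r1 b r2 : Type*} [Fintype s] [Fintype r1] [Fintype b] [Fintype r2]
    {R : Type*} [CommSemiring R] (F : s × r1 → R) (G : b × r2 → R) :
    ∑ z : (s × b) × (r1 × r2), F (z.1.1, z.2.1) * G (z.1.2, z.2.2)
      = (∑ x, F x) * (∑ y, G y) := by
  rw [← Equiv.sum_comp (Equiv.prodProdProdComm s r1 b r2)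
    (fun z : (s × b) × (r1 × r2) => F (z.1.1, z.2.1) * G (z.1.2, z.2.2))]
  rw [Fintype.sum_prod_type, Finset.sum_mul_sum]
  rfl

lemma trSnd_prod_kron {s r1 b r2 : Type*} [Fintype s] [Fintype r1] [Fintype b] [Fintype r2]
    (f : s × r1 → ℂ) (g : b × r2 → ℂ) (Φ : (s × b) × (r1 × r2) → ℂ)
    (hΦ : ∀ z, Φ z = f (z.1.1, z.2.1) * g (z.1.2, z.2.2)) :
    trSnd (pureState Φ) = (trSnd (pureState f)) ⊗ₖ (trSnd (pureState g)) := by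
  ext ⟨i1, i2⟩ ⟨j1, j2⟩
  show ∑ k : r1 × r2, Φ ((i1, i2), k) * (starRingEnd ℂ) (Φ ((j1, j2), k))
      = (∑ k, f (i1, k) * (starRingEnd ℂ) (f (j1, k)))
        * (∑ k, g (i2, k) * (starRingEnd ℂ) (g (j2, k)))
  rw [Fintype.sum_prod_type, Finset.sum_mul_sum]
  refine Finset.sum_congr rfl fun k1 _ => Finset.sum_congr rfl fun k2 _ => ?_
  rw [hΦ ((i1, i2), (k1, k2)), hΦ ((j1, j2), (k1, k2))]
  simp only [_root_.map_mul]
  ring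

lemma vnEntropy_nonneg {n : Type*} [Fintype n] [DecidableEq n] {ρ : Matrix n n ℂ}
    (h : ρ.PosSemidef) (ht : ρ.trace = 1) : 0 ≤ vnEntropy ρ := by
  rw [vnEntropy, dif_pos h.1]
  have hsum : ∑ i, h.1.eigenvalues i = 1 := by
    have hh := sum_eigenvalues_eq_trace h.1
    rw [ht] at hh
    exact_mod_cast hh
  have hle : ∀ i, h.1.eigenvalues i ≤ 1 := by
    intro i
    rw [← hsum]
    exact Finset.single_le_sum (fun j _ => h.eigenvalues_nonneg j) (Finset.mem_univ i)
  rw [neg_nonneg]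
  refine Finset.sum_nonpos fun i _ => ?_
  rcases eq_or_lt_of_le (h.eigenvalues_nonneg i) with hz | hz
  · simp [← hz]
  · exact mul_nonpos_of_nonneg_of_nonpos (le_of_lt hz)
      (Real.log_nonpos (le_of_lt hz) (hle i))

lemma entEntropy_nonneg {a b : Type*} [Fintype a] [Fintype b] [DecidableEq a]
    {φ : a × b → ℂ} (h : IsUnitVec φ) : 0 ≤ entEntropy φ :=
  vnEntropy_nonneg (trSnd_pureState_posSemidef φ) (trSnd_pureState_trace φ h)

lemma entEntropy_prod {s r1 b r2 : Type*} [Fintype s] [Fintype r1] [Fintype b] [Fintype r2]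
    [DecidableEq s] [DecidableEq b]
    (f : s × r1 → ℂ) (hf : IsUnitVec f) (g : b × r2 → ℂ) (hg : IsUnitVec g)
    (Φ : (s × b) × (r1 × r2) → ℂ)
    (hΦ : ∀ z, Φ z = f (z.1.1, z.2.1) * g (z.1.2, z.2.2)) :
    entEntropy Φ = entEntropy f + vnEntropy (trSnd (pureState g)) := by
  unfold entEntropy
  rw [trSnd_prod_kron f g Φ hΦ]
  exact vnEntropy_kronecker (trSnd_pureState_posSemidef f) (trSnd_pureState_posSemidef g)
    (trSnd_pureState_trace f hf) (trSnd_pureState_trace g hg)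

lemma sInf_image_add (S : Set ℝ) (hne : S.Nonempty) (hbd : BddBelow S) (c : ℝ) :
    sInf ((fun x => x + c) '' S) = sInf S + c := by
  have hne' : ((fun x => x + c) '' S).Nonempty := hne.image _
  have hbd' : BddBelow ((fun x => x + c) '' S) := by
    obtain ⟨m, hm⟩ := hbd
    exact ⟨m + c, by rintro y ⟨x, hx, rfl⟩; exact add_le_add_left (hm hx) c⟩
  apply le_antisymm
  · have h : sInf ((fun x => x + c) '' S) - c ≤ sInf S := by
      refine le_csInf hne fun x hx => ?_
      have h2 := csInf_le hbd' ⟨x, hx, rfl⟩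
      simp only at h2
      linarith
    linarith
  · refine le_csInf hne' ?_
    rintro y ⟨x, hx, rfl⟩
    exact add_le_add_left (csInf_le hbd hx) c

end AuxLemmas
/-- for a product pure state `|Ψ⟩ = |ψ_{PSR1}⟩ ⊗ |ψ_{BR2}⟩`, the
partial trace over `P` factorizes, and the entanglement of formation between
`S⊗B` and `R1⊗R2` equals `E_F^{S-R1}(tr_P|ψ_{PSR1}⟩⟨ψ_{PSR1}|) +
S(tr_{R2}|ψ_{BR2}⟩⟨ψ_{BR2}|)`. -/
theorem entFormation_product_state
    {p s b r1 r2 : Type*} [Fintype p] [Fintype s] [Fintype b] [Fintype r1] [Fintype r2]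
    [DecidableEq p] [DecidableEq s] [DecidableEq b] [DecidableEq r1] [DecidableEq r2]
    (ψ1 : p × (s × r1) → ℂ) (hψ1 : IsUnitVec ψ1)
    (ψ2 : b × r2 → ℂ) (hψ2 : IsUnitVec ψ2)
    (Ψ : p × ((s × r1) × (b × r2)) → ℂ)
    (hΨ : ∀ (pi : p) (x : s × r1) (y : b × r2), Ψ (pi, (x, y)) = ψ1 (pi, x) * ψ2 y) :
    trFst (pureState Ψ) = (trFst (pureState ψ1)) ⊗ₖ pureState ψ2 ∧
    entFormation
      (Matrix.submatrix (trFst (pureState Ψ))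
        (fun x : (s × b) × (r1 × r2) => ((x.1.1, x.2.1), (x.1.2, x.2.2)))
        (fun x : (s × b) × (r1 × r2) => ((x.1.1, x.2.1), (x.1.2, x.2.2)))) =
      entFormation (trFst (pureState ψ1)) + vnEntropy (trSnd (pureState ψ2)) := by
  classical
  have part1 : trFst (pureState Ψ) = (trFst (pureState ψ1)) ⊗ₖ pureState ψ2 := by
    ext ⟨x, y⟩ ⟨x', y'⟩
    show ∑ k, Ψ (k, (x, y)) * (starRingEnd ℂ) (Ψ (k, (x', y')))
        = (∑ k, ψ1 (k, x) * (starRingEnd ℂ) (ψ1 (k, x'))) * (ψ2 y * (starRingEnd ℂ) (ψ2 y'))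
    rw [Finset.sum_mul]
    refine Finset.sum_congr rfl fun k _ => ?_
    rw [hΨ k x y, hΨ k x' y', _root_.map_mul]
    ring
  refine ⟨part1, ?_⟩
  set M : Matrix ((s × b) × (r1 × r2)) ((s × b) × (r1 × r2)) ℂ :=
    Matrix.submatrix (trFst (pureState Ψ))
      (fun x : (s × b) × (r1 × r2) => ((x.1.1, x.2.1), (x.1.2, x.2.2)))
      (fun x : (s × b) × (r1 × r2) => ((x.1.1, x.2.1), (x.1.2, x.2.2))) with hMdef
  set ρ : Matrix (s × r1) (s × r1) ℂ := trFst (pureState ψ1) with hρdef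
  set cS : ℝ := vnEntropy (trSnd (pureState ψ2)) with hcS
  -- entries of M
  have hent : ∀ z z' : (s × b) × (r1 × r2),
      M z z' = ρ (z.1.1, z.2.1) (z'.1.1, z'.2.1) *
        (ψ2 (z.1.2, z.2.2) * (starRingEnd ℂ) (ψ2 (z'.1.2, z'.2.2))) := by
    intro z z'
    show trFst (pureState Ψ) ((z.1.1, z.2.1), (z.1.2, z.2.2)) ((z'.1.1, z'.2.1), (z'.1.2, z'.2.2)) = _
    rw [part1]
    rfl
  -- the two decomposition sets
  set SA : Set ℝ := { x | ∃ (m : ℕ) (q : Fin m → ℝ) (φ : Fin m → ((s × b) × (r1 × r2)) → ℂ),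
    (∀ j, 0 ≤ q j) ∧ (∑ j, q j = 1) ∧ (∀ j, IsUnitVec (φ j)) ∧
    M = ∑ j, (q j : ℂ) • pureState (φ j) ∧
    x = ∑ j, q j * entEntropy (φ j) } with hSA
  set SB : Set ℝ := { x | ∃ (m : ℕ) (q : Fin m → ℝ) (φ : Fin m → (s × r1) → ℂ),
    (∀ j, 0 ≤ q j) ∧ (∑ j, q j = 1) ∧ (∀ j, IsUnitVec (φ j)) ∧
    ρ = ∑ j, (q j : ℂ) • pureState (φ j) ∧
    x = ∑ j, q j * entEntropy (φ j) } with hSB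
  have hEA : entFormation M = sInf SA := rfl
  have hEB : entFormation ρ = sInf SB := rfl
  -- nonemptiness of the index type
  have hne_psr : Nonempty (p × (s × r1)) := by
    by_contra h
    rw [not_nonempty_iff] at h
    have h0 : ∑ i, Complex.normSq (ψ1 i) = 0 := by
      rw [Finset.univ_eq_empty, Finset.sum_empty]
    rw [hψ1] at h0
    norm_num at h0
  have hne_sr : Nonempty (s × r1) := ⟨hne_psr.some.2⟩
  set x0 : s × r1 := hne_sr.some with hx0
  set e0 : (s × r1) → ℂ := fun x => if x = x0 then 1 else 0 with he0def
  have he0 : IsUnitVec e0 := by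
    rw [IsUnitVec]
    have hstep : ∀ x : s × r1, Complex.normSq (e0 x) = if x = x0 then 1 else 0 := by
      intro x
      rw [he0def]
      by_cases h : x = x0 <;> simp [h]
    rw [Finset.sum_congr rfl fun x _ => hstep x,
      Finset.sum_ite_eq' Finset.univ x0 (fun _ => (1 : ℝ))]
    simp
  -- a nonzero component of ψ2
  have hy0 : ∃ y0, ψ2 y0 ≠ 0 := by
    by_contra h
    push_neg at h
    have h0 : ∑ y, Complex.normSq (ψ2 y) = 0 := by
      refine Finset.sum_eq_zero fun y _ => ?_
      rw [h y, Complex.normSq_zero]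
    rw [hψ2] at h0
    norm_num at h0
  obtain ⟨y0, hy0⟩ := hy0
  have hψ2sumC : ∑ y, (starRingEnd ℂ) (ψ2 y) * ψ2 y = 1 := by
    have : ∀ y, (starRingEnd ℂ) (ψ2 y) * ψ2 y = ((Complex.normSq (ψ2 y) : ℝ) : ℂ) := by
      intro y
      rw [mul_comm, Complex.mul_conj]
    rw [Finset.sum_congr rfl fun y _ => this y, ← Complex.ofReal_sum, hψ2, Complex.ofReal_one]
  -- the set equality
  have hset : SA = (fun x => x + cS) '' SB := by
    ext t
    constructor
    · rintro ⟨mm, q, Φ, hq0, hq1, hu, hdec, rfl⟩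
      have hdecz : ∀ z z', M z z' = ∑ j, (q j : ℂ) * (Φ j z * (starRingEnd ℂ) (Φ j z')) := by
        intro z z'
        rw [hdec, Matrix.sum_apply]
        refine Finset.sum_congr rfl fun j _ => ?_
        rw [Matrix.smul_apply, pureState_apply, smul_eq_mul]
      set φt : Fin mm → (s × r1) → ℂ :=
        fun j x => ∑ y : b × r2, (starRingEnd ℂ) (ψ2 y) * Φ j ((x.1, y.1), (x.2, y.2)) with hφt
      have claimA : ∀ j, q j ≠ 0 → ∀ z, Φ j z = φt j (z.1.1, z.2.1) * ψ2 (z.1.2, z.2.2) := by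
        intro j hj
        suffices h : ∀ (x : s × r1) (y : b × r2),
            Φ j ((x.1, y.1), (x.2, y.2)) = φt j x * ψ2 y by
          intro z
          exact h (z.1.1, z.2.1) (z.1.2, z.2.2)
        intro x
        set C : b × r2 → ℂ := fun y => Φ j ((x.1, y.1), (x.2, y.2)) - φt j x * ψ2 y with hC
        have horto : ∑ y, (starRingEnd ℂ) (ψ2 y) * C y = 0 := by
          have expand : ∀ y, (starRingEnd ℂ) (ψ2 y) * C y
              = (starRingEnd ℂ) (ψ2 y) * Φ j ((x.1, y.1), (x.2, y.2))
                - φt j x * ((starRingEnd ℂ) (ψ2 y) * ψ2 y) := by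
            intro y
            rw [hC]
            ring
          rw [Finset.sum_congr rfl fun y _ => expand y, Finset.sum_sub_distrib,
            ← Finset.mul_sum, hψ2sumC, mul_one]
          have hfirst : ∑ y, (starRingEnd ℂ) (ψ2 y) * Φ j ((x.1, y.1), (x.2, y.2)) = φt j x := rfl
          rw [hfirst, sub_self]
        have horto' : ∑ y, (starRingEnd ℂ) (C y) * ψ2 y = 0 := by
          have hconj : ∑ y, (starRingEnd ℂ) (C y) * ψ2 y
              = (starRingEnd ℂ) (∑ y, (starRingEnd ℂ) (ψ2 y) * C y) := by
            rw [map_sum]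
            refine Finset.sum_congr rfl fun y _ => ?_
            rw [_root_.map_mul, Complex.conj_conj]
            ring
          rw [hconj, horto, map_zero]
        set T : Fin mm → ℂ :=
          fun i => ∑ y, (starRingEnd ℂ) (C y) * Φ i ((x.1, y.1), (x.2, y.2)) with hT
        have hQ1 : (∑ y : b × r2, ∑ y' : b × r2, (starRingEnd ℂ) (C y) *
              M ((x.1, y.1), (x.2, y.2)) ((x.1, y'.1), (x.2, y'.2)) * C y') = 0 := by
          have e : ∀ y y' : b × r2, (starRingEnd ℂ) (C y) *
                M ((x.1, y.1), (x.2, y.2)) ((x.1, y'.1), (x.2, y'.2)) * C y'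
              = (ρ (x.1, x.2) (x.1, x.2) * ((starRingEnd ℂ) (C y) * ψ2 y)) *
                  ((starRingEnd ℂ) (ψ2 y') * C y') := by
            intro y y'
            rw [hent ((x.1, y.1), (x.2, y.2)) ((x.1, y'.1), (x.2, y'.2))]
            ring
          rw [Finset.sum_congr rfl fun y _ => Finset.sum_congr rfl fun y' _ => e y y',
            ← Finset.sum_mul_sum, ← Finset.mul_sum, horto', mul_zero, zero_mul]
        have hQ2 : (∑ y : b × r2, ∑ y' : b × r2, (starRingEnd ℂ) (C y) *
              M ((x.1, y.1), (x.2, y.2)) ((x.1, y'.1), (x.2, y'.2)) * C y')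
            = ∑ i, (q i : ℂ) * (T i * (starRingEnd ℂ) (T i)) := by
          have e2 : ∀ y y' : b × r2, (starRingEnd ℂ) (C y) *
                M ((x.1, y.1), (x.2, y.2)) ((x.1, y'.1), (x.2, y'.2)) * C y'
              = ∑ i, (q i : ℂ) * (((starRingEnd ℂ) (C y) * Φ i ((x.1, y.1), (x.2, y.2))) *
                  ((starRingEnd ℂ) (Φ i ((x.1, y'.1), (x.2, y'.2))) * C y')) := by
            intro y y'
            rw [hdecz, Finset.mul_sum, Finset.sum_mul]
            refine Finset.sum_congr rfl fun i _ => ?_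
            ring
          rw [Finset.sum_congr rfl fun y _ => Finset.sum_congr rfl fun y' _ => e2 y y']
          rw [Finset.sum_congr rfl fun y _ => Finset.sum_comm, Finset.sum_comm]
          refine Finset.sum_congr rfl fun i _ => ?_
          have hconjT : (starRingEnd ℂ) (T i)
              = ∑ y', (starRingEnd ℂ) (Φ i ((x.1, y'.1), (x.2, y'.2))) * C y' := by
            rw [hT, map_sum]
            refine Finset.sum_congr rfl fun y' _ => ?_
            rw [_root_.map_mul, Complex.conj_conj]
            ring
          rw [hconjT, hT, Finset.sum_mul_sum]
          rw [Finset.mul_sum]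
          refine Finset.sum_congr rfl fun y _ => ?_
          rw [Finset.mul_sum]
        have hsum0 : ∑ i, q i * Complex.normSq (T i) = 0 := by
          have hc0 : ∑ i, (q i : ℂ) * (T i * (starRingEnd ℂ) (T i)) = 0 := by
            rw [← hQ2, hQ1]
          have : ∑ i, ((q i * Complex.normSq (T i) : ℝ) : ℂ) = 0 := by
            rw [← hc0]
            refine Finset.sum_congr rfl fun i _ => ?_
            rw [Complex.mul_conj]
            push_cast
            ring
          exact_mod_cast this
        have hTj : T j = 0 := by
          have := (Finset.sum_eq_zero_iff_of_nonneg
            (fun i _ => mul_nonneg (hq0 i) (Complex.normSq_nonneg (T i)))).mp hsum0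
          have hj2 := this j (Finset.mem_univ j)
          have : Complex.normSq (T j) = 0 := by
            rcases mul_eq_zero.mp hj2 with h | h
            · exact absurd h hj
            · exact h
          exact Complex.normSq_eq_zero.mp this
        have hCsum : ∑ y, ((Complex.normSq (C y) : ℝ) : ℂ) = 0 := by
          have hTexp : T j = (∑ y, ((Complex.normSq (C y) : ℝ) : ℂ))
              + φt j x * ∑ y, (starRingEnd ℂ) (C y) * ψ2 y := by
            rw [hT, Finset.mul_sum, ← Finset.sum_add_distrib]
            refine Finset.sum_congr rfl fun y _ => ?_
            have hΦeq : Φ j ((x.1, y.1), (x.2, y.2)) = C y + φt j x * ψ2 y := by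
              rw [hC]
              ring
            rw [hΦeq, mul_add]
            congr 1
            · rw [mul_comm, Complex.mul_conj]
            · ring
          rw [hTj] at hTexp
          rw [horto', mul_zero, add_zero] at hTexp
          exact hTexp.symm
        have hCreal : ∑ y, Complex.normSq (C y) = 0 := by exact_mod_cast hCsum
        have hCzero : ∀ y, C y = 0 := by
          intro y
          have := (Finset.sum_eq_zero_iff_of_nonneg
            (fun y _ => Complex.normSq_nonneg (C y))).mp hCreal y (Finset.mem_univ y)
          exact Complex.normSq_eq_zero.mp this
        intro y
        have := hCzero y
        rw [hC] at this
        linear_combination this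
      -- unit norm of the extracted vectors
      have claimB : ∀ j, q j ≠ 0 → IsUnitVec (φt j) := by
        intro j hj
        have h1 : (1 : ℝ) = ∑ z : (s × b) × (r1 × r2), Complex.normSq (Φ j z) := (hu j).symm
        have h2 : ∀ z : (s × b) × (r1 × r2), Complex.normSq (Φ j z)
            = Complex.normSq (φt j (z.1.1, z.2.1)) * Complex.normSq (ψ2 (z.1.2, z.2.2)) := by
          intro z
          rw [claimA j hj z, Complex.normSq_mul]
        rw [Finset.sum_congr rfl fun z _ => h2 z] at h1
        rw [sum_factor (fun u => Complex.normSq (φt j u)) (fun y => Complex.normSq (ψ2 y)),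
          hψ2, mul_one] at h1
        exact h1.symm
      set φ' : Fin mm → (s × r1) → ℂ := fun j => if q j = 0 then e0 else φt j with hφ'
      have hu' : ∀ j, IsUnitVec (φ' j) := by
        intro j
        by_cases h : q j = 0
        · have hh : φ' j = e0 := by rw [hφ']; simp [h]
          rw [hh]; exact he0
        · have hh : φ' j = φt j := by rw [hφ']; simp [h]
          rw [hh]; exact claimB j h
      have claimC : ρ = ∑ j, (q j : ℂ) • pureState (φ' j) := by
        ext u u'
        have hcancel : ρ u u' * (ψ2 y0 * (starRingEnd ℂ) (ψ2 y0))
            = (∑ j, (q j : ℂ) * (φ' j u * (starRingEnd ℂ) (φ' j u'))) *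
                (ψ2 y0 * (starRingEnd ℂ) (ψ2 y0)) := by
          have hL : ρ u u' * (ψ2 y0 * (starRingEnd ℂ) (ψ2 y0))
              = M ((u.1, y0.1), (u.2, y0.2)) ((u'.1, y0.1), (u'.2, y0.2)) := by
            rw [hent ((u.1, y0.1), (u.2, y0.2)) ((u'.1, y0.1), (u'.2, y0.2))]
          rw [hL, hdecz, Finset.sum_mul]
          refine Finset.sum_congr rfl fun j _ => ?_
          by_cases h : q j = 0
          · simp [h]
          · rw [claimA j h ((u.1, y0.1), (u.2, y0.2)), claimA j h ((u'.1, y0.1), (u'.2, y0.2))]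
            have hh : φ' j = φt j := by rw [hφ']; simp [h]
            rw [hh, _root_.map_mul]
            ring
        have hne0 : ψ2 y0 * (starRingEnd ℂ) (ψ2 y0) ≠ 0 := by
          rw [Complex.mul_conj]
          simp only [ne_eq, Complex.ofReal_eq_zero]
          exact fun hcon => hy0 (Complex.normSq_eq_zero.mp (by exact_mod_cast hcon))
        have := mul_right_cancel₀ hne0 hcancel
        rw [this, Matrix.sum_apply]
        refine Finset.sum_congr rfl fun j _ => ?_
        rw [Matrix.smul_apply, pureState_apply, smul_eq_mul]
      have claimD : ∑ j, q j * entEntropy (Φ j)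
          = (∑ j, q j * entEntropy (φ' j)) + cS := by
        have hterm : ∀ j, q j * entEntropy (Φ j)
            = q j * entEntropy (φ' j) + q j * cS := by
          intro j
          by_cases h : q j = 0
          · rw [h]; ring
          · have hφeq : φ' j = φt j := by rw [hφ']; simp [h]
            have := entEntropy_prod (φt j) (claimB j h) ψ2 hψ2 (Φ j) (claimA j h)
            rw [hφeq, this, hcS]
            ring
        rw [Finset.sum_congr rfl fun j _ => hterm j, Finset.sum_add_distrib, ← Finset.sum_mul,
          hq1, one_mul]
      exact ⟨∑ j, q j * entEntropy (φ' j), ⟨mm, q, φ', hq0, hq1, hu', claimC, rfl⟩, claimD.symm⟩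
    · rintro ⟨tB, ⟨mm, q, φ, hq0, hq1, hu, hdec, rfl⟩, rfl⟩
      have hdecz : ∀ u u', ρ u u' = ∑ j, (q j : ℂ) * (φ j u * (starRingEnd ℂ) (φ j u')) := by
        intro u u'
        rw [hdec, Matrix.sum_apply]
        refine Finset.sum_congr rfl fun j _ => ?_
        rw [Matrix.smul_apply, pureState_apply, smul_eq_mul]
      set Φ : Fin mm → ((s × b) × (r1 × r2)) → ℂ :=
        fun j z => φ j (z.1.1, z.2.1) * ψ2 (z.1.2, z.2.2) with hΦdef
      have huΦ : ∀ j, IsUnitVec (Φ j) := by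
        intro j
        rw [IsUnitVec]
        have h2 : ∀ z : (s × b) × (r1 × r2), Complex.normSq (Φ j z)
            = Complex.normSq (φ j (z.1.1, z.2.1)) * Complex.normSq (ψ2 (z.1.2, z.2.2)) := by
          intro z
          rw [hΦdef, Complex.normSq_mul]
        rw [Finset.sum_congr rfl fun z _ => h2 z,
          sum_factor (fun u => Complex.normSq (φ j u)) (fun y => Complex.normSq (ψ2 y)),
          hψ2, mul_one]
        exact hu j
      have hdecM : M = ∑ j, (q j : ℂ) • pureState (Φ j) := by
        ext z z'
        rw [hent z z', hdecz, Finset.sum_mul, Matrix.sum_apply]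
        refine Finset.sum_congr rfl fun j _ => ?_
        rw [Matrix.smul_apply, pureState_apply, smul_eq_mul, hΦdef]
        simp only [_root_.map_mul]
        ring
      have hval : ∑ j, q j * entEntropy (Φ j)
          = (∑ j, q j * entEntropy (φ j)) + cS := by
        have hterm : ∀ j, q j * entEntropy (Φ j)
            = q j * entEntropy (φ j) + q j * cS := by
          intro j
          have := entEntropy_prod (φ j) (hu j) ψ2 hψ2 (Φ j) (fun z => rfl)
          rw [this, hcS]
          ring
        rw [Finset.sum_congr rfl fun j _ => hterm j, Finset.sum_add_distrib, ← Finset.sum_mul,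
          hq1, one_mul]
      exact ⟨mm, q, Φ, hq0, hq1, huΦ, hdecM, hval.symm⟩
  -- SB is nonempty
  have hBne : SB.Nonempty := by
    set mp := Fintype.card p with hmp
    set ep : p ≃ Fin mp := Fintype.equivFin p with hep
    set q : Fin mp → ℝ := fun i => ∑ u, Complex.normSq (ψ1 (ep.symm i, u)) with hq
    set φ : Fin mp → (s × r1) → ℂ :=
      fun i u => if q i = 0 then e0 u else ((Real.sqrt (q i) : ℂ))⁻¹ * ψ1 (ep.symm i, u) with hφ
    have hq0 : ∀ i, 0 ≤ q i := fun i => Finset.sum_nonneg fun u _ => Complex.normSq_nonneg _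
    have hq1 : ∑ i, q i = 1 := by
      have h1 : ∑ i : Fin mp, q i = ∑ k : p, q (ep k) := (Equiv.sum_comp ep q).symm
      have h2 : ∀ k : p, q (ep k) = ∑ u, Complex.normSq (ψ1 (k, u)) := by
        intro k
        show ∑ u, Complex.normSq (ψ1 (ep.symm (ep k), u)) = _
        rw [Equiv.symm_apply_apply]
      rw [h1, Finset.sum_congr rfl fun k _ => h2 k,
        ← Fintype.sum_prod_type (f := fun z : p × (s × r1) => Complex.normSq (ψ1 z))]
      exact hψ1
    have hzero : ∀ i u, q i = 0 → ψ1 (ep.symm i, u) = 0 := by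
      intro i u h
      have := (Finset.sum_eq_zero_iff_of_nonneg
        (fun u _ => Complex.normSq_nonneg (ψ1 (ep.symm i, u)))).mp h u (Finset.mem_univ u)
      exact Complex.normSq_eq_zero.mp this
    have hunit : ∀ i, IsUnitVec (φ i) := by
      intro i
      by_cases h : q i = 0
      · have : φ i = e0 := by funext u; rw [hφ]; simp [h]
        rw [this]; exact he0
      · rw [IsUnitVec]
        have hqpos : 0 < q i := lt_of_le_of_ne (hq0 i) (Ne.symm h)
        have hstep : ∀ u, Complex.normSq (φ i u) = (q i)⁻¹ * Complex.normSq (ψ1 (ep.symm i, u)) := by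
          intro u
          show Complex.normSq (if q i = 0 then e0 u else ((Real.sqrt (q i) : ℂ))⁻¹ * ψ1 (ep.symm i, u)) = _
          rw [if_neg h, Complex.normSq_mul, Complex.normSq_inv, Complex.normSq_ofReal,
            Real.mul_self_sqrt (hq0 i)]
        rw [Finset.sum_congr rfl fun u _ => hstep u, ← Finset.mul_sum]
        have hqq : ∑ u, Complex.normSq (ψ1 (ep.symm i, u)) = q i := rfl
        rw [hqq, inv_mul_cancel₀ h]
    have hdec : ρ = ∑ i, (q i : ℂ) • pureState (φ i) := by
      ext u u'
      rw [Matrix.sum_apply]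
      have hL : ρ u u' = ∑ k : p, ψ1 (k, u) * (starRingEnd ℂ) (ψ1 (k, u')) := rfl
      rw [hL, ← Equiv.sum_comp ep
        (fun i => ((q i : ℂ) • pureState (φ i)) u u')]
      refine Finset.sum_congr rfl fun k _ => ?_
      rw [Matrix.smul_apply, pureState_apply, smul_eq_mul]
      by_cases h : q (ep k) = 0
      · have h1 : ψ1 (k, u) = 0 := by
          have := hzero (ep k) u h
          rwa [Equiv.symm_apply_apply] at this
        rw [h1, h]
        simp
      · have hφeq : ∀ w, φ (ep k) w = ((Real.sqrt (q (ep k)) : ℂ))⁻¹ * ψ1 (k, w) := by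
          intro w
          show (if q (ep k) = 0 then e0 w else ((Real.sqrt (q (ep k)) : ℂ))⁻¹ * ψ1 (ep.symm (ep k), w)) = _
          rw [if_neg h, Equiv.symm_apply_apply]
        rw [hφeq u, hφeq u', _root_.map_mul, map_inv₀, Complex.conj_ofReal]
        have hs : ((Real.sqrt (q (ep k)) : ℂ)) * ((Real.sqrt (q (ep k)) : ℂ))
            = ((q (ep k) : ℝ) : ℂ) := by
          rw [← Complex.ofReal_mul, Real.mul_self_sqrt (hq0 (ep k))]
        have hsne : ((Real.sqrt (q (ep k)) : ℂ)) ≠ 0 := by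
          rw [ne_eq, Complex.ofReal_eq_zero]
          exact ne_of_gt (Real.sqrt_pos.mpr (lt_of_le_of_ne (hq0 (ep k)) (Ne.symm h)))
        field_simp
        linear_combination (ψ1 (k, u) * (starRingEnd ℂ) (ψ1 (k, u'))) * hs
    exact ⟨∑ i, q i * entEntropy (φ i), mp, q, φ, hq0, hq1, hunit, hdec, rfl⟩
  -- SB is bounded below
  have hBbd : BddBelow SB := by
    refine ⟨0, ?_⟩
    rintro t ⟨mm, q, φ, hq0, hq1, hu, hdec, rfl⟩
    exact Finset.sum_nonneg fun j _ => mul_nonneg (hq0 j) (entEntropy_nonneg (hu j))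
  rw [hEA, hEB, hset, sInf_image_add SB hBne hBbd]
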